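/- arXiv:1904.02976 — 2 statements merged into one kernel-verified Lean document; each statement's English description precedes it below -/
import Mathlib

section
/- Let U, V, W be subspaces of a projective space over a field, of projective dimensions a, a', a'' respectively with a ≥ max{a', a'', 0}, such that V ≠ U ∩ V = U ∩ W ≠ W. Let p be a point not in U ∪ V ∪ W lying in the span of U with some point (so that all lines pq for q ∈ U make sense within one ambient projective space). If for every point q ∈ U \ V the line pq meets V ∪ W, then dim(U ∩ V) = a − 1. -/
/-- Projective geometry formulated linearly: subspaces of a projective space `PG(V₀)` are
linear subspaces of `V₀`, the projective dimension of a subspace is its linear dimension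
minus one, points are (spanned by) nonzero vectors, and the line `pq` is (the projectivization
of) `span {p, q}`.

Let `U, V, W` be subspaces of projective dimensions `a, a', a''` with `a ≥ max{a', a'', 0}`,
such that `V ≠ U ∩ V = U ∩ W ≠ W`. Let `p` be a point not in `U ∪ V ∪ W`. If for every point
`q ∈ U \ V` the line `pq` meets `V ∪ W`, then `dim (U ∩ V) = a - 1` (i.e. the linear
dimension of `U ⊓ V` is `a`). -/
theorem dim_inter_eq_of_lines_meet
    {K V₀ : Type*} [Field K] [AddCommGroup V₀] [Module K V₀]
    (U V W : Submodule K V₀)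
    [FiniteDimensional K U] [FiniteDimensional K V] [FiniteDimensional K W]
    (a a' a'' : ℕ)
    (hU : Module.finrank K U = a + 1)
    (hV : Module.finrank K V = a' + 1)
    (hW : Module.finrank K W = a'' + 1)
    (ha' : a' ≤ a) (ha'' : a'' ≤ a)
    (hVne : V ≠ U ⊓ V) (hUVW : U ⊓ V = U ⊓ W) (hWne : U ⊓ W ≠ W)
    (p : V₀) (hpU : p ∉ U) (hpV : p ∉ V) (hpW : p ∉ W)
    (hline : ∀ q ∈ U, q ∉ V →
      ∃ x : V₀, x ≠ 0 ∧ x ∈ Submodule.span K ({p, q} : Set V₀) ∧ (x ∈ V ∨ x ∈ W)) :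
    Module.finrank K ↥(U ⊓ V) = a := by
  have hp0 : p ≠ 0 := fun h => hpU (h ▸ U.zero_mem)
  -- U is not contained in V, nor in W
  have hUV : ¬ U ≤ V := by
    intro h
    have hUVeq : U = V := Submodule.eq_of_le_of_finrank_le h (by omega)
    exact hVne (by rw [hUVeq, inf_idem])
  have hUW : ¬ U ≤ W := by
    intro h
    have hUWeq : U = W := Submodule.eq_of_le_of_finrank_le h (by omega)
    exact hWne (by rw [hUWeq, inf_idem])
  -- every element of U lies in (V ⊔ Kp) ∪ (W ⊔ Kp)
  have hcov : ∀ q ∈ U, q ∈ V ⊔ Submodule.span K {p} ∨ q ∈ W ⊔ Submodule.span K {p} := by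
    intro q hq
    by_cases hqV : q ∈ V
    · exact Or.inl (Submodule.mem_sup_left hqV)
    obtain ⟨x, hx0, hxspan, hxVW⟩ := hline q hq hqV
    rw [Submodule.mem_span_pair] at hxspan
    obtain ⟨α, β, hx⟩ := hxspan
    have hβ : β ≠ 0 := by
      rintro rfl
      rw [zero_smul, add_zero] at hx
      have hα : α ≠ 0 := by rintro rfl; rw [zero_smul] at hx; exact hx0 hx.symm
      have hpx : p = α⁻¹ • x := by rw [← hx, smul_smul, inv_mul_cancel₀ hα, one_smul]
      rcases hxVW with h | h
      · exact hpV (hpx ▸ V.smul_mem _ h)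
      · exact hpW (hpx ▸ W.smul_mem _ h)
    have hq' : q = β⁻¹ • x - (β⁻¹ * α) • p := by
      rw [← hx, smul_add, smul_smul, smul_smul, inv_mul_cancel₀ hβ, one_smul, mul_comm,
        add_sub_cancel_left]
    have hpmem : p ∈ Submodule.span K ({p} : Set V₀) := Submodule.mem_span_singleton_self p
    rcases hxVW with h | h
    · exact Or.inl (hq' ▸ sub_mem (Submodule.mem_sup_left (V.smul_mem _ h))
        (Submodule.mem_sup_right (Submodule.smul_mem _ _ hpmem)))
    · exact Or.inr (hq' ▸ sub_mem (Submodule.mem_sup_left (W.smul_mem _ h))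
        (Submodule.mem_sup_right (Submodule.smul_mem _ _ hpmem)))
  -- hence U ≤ V ⊔ Kp or U ≤ W ⊔ Kp
  have hcase : U ≤ V ⊔ Submodule.span K {p} ∨ U ≤ W ⊔ Submodule.span K {p} := by
    by_contra hc
    push_neg at hc
    obtain ⟨h1, h2⟩ := hc
    obtain ⟨u, huU, hu1⟩ := SetLike.not_le_iff_exists.mp h1
    obtain ⟨w, hwU, hw2⟩ := SetLike.not_le_iff_exists.mp h2
    have huW : u ∈ W ⊔ Submodule.span K {p} := (hcov u huU).resolve_left hu1
    have hwV : w ∈ V ⊔ Submodule.span K {p} := (hcov w hwU).resolve_right hw2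
    rcases hcov (u + w) (add_mem huU hwU) with h | h
    · exact hu1 (by simpa using sub_mem h hwV)
    · exact hw2 (by simpa using sub_mem h huW)
  -- key estimate
  have key : ∀ (X : Submodule K V₀) (b : ℕ) (_ : FiniteDimensional K X),
      Module.finrank K X = b + 1 → b ≤ a → p ∉ X → U ≤ X ⊔ Submodule.span K {p} →
      a ≤ Module.finrank K ↥(U ⊓ X) := by
    intro X b _ hXr hba hpX hUle
    have hsup : U ⊔ X ≤ X ⊔ Submodule.span K {p} :=
      sup_le hUle le_sup_left
    have h1 : Module.finrank K ↥(X ⊔ Submodule.span K {p}) ≤ b + 2 := by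
      calc Module.finrank K ↥(X ⊔ Submodule.span K {p})
          ≤ Module.finrank K X + Module.finrank K ↥(Submodule.span K ({p} : Set V₀)) :=
            Submodule.finrank_add_le_finrank_add_finrank _ _
        _ = b + 2 := by rw [hXr, finrank_span_singleton hp0]
    have h2 : Module.finrank K ↥(U ⊔ X) ≤ b + 2 :=
      le_trans (Submodule.finrank_mono hsup) h1
    have h3 := Submodule.finrank_sup_add_finrank_inf_eq U X
    rw [hU, hXr] at h3
    omega
  -- upper bound: U ⊓ V < U
  have hlt : U ⊓ V < U := lt_of_le_of_ne inf_le_left (fun h => hUV (h ▸ inf_le_right))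
  have hub : Module.finrank K ↥(U ⊓ V) < a + 1 := hU ▸ Submodule.finrank_lt_finrank_of_lt hlt
  rcases hcase with h | h
  · have := key V a' inferInstance hV ha' hpV h
    omega
  · have := key W a'' inferInstance hW ha'' hpW h
    rw [hUVW]
    have h2 := hUVW ▸ hub
    omega
end

section
/- In a generalized quadrangle, let L₁ and L₂ be two opposite (disjoint, non-concurrent) lines and suppose L, L' are two further lines, each of which together with L₁, L₂ has the property that every line meeting two of {L₁, L₂, L} (resp. {L₁, L₂, L'}) meets the third. Then L and L' are disjoint, and every line meeting both L and L' also meets L₁ and L₂. -/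
/-- A generalized quadrangle: a point-line incidence geometry in which every line has at
least two points, two points lie on at most one common line, and for every point `p` and
line `l` with `p` not on `l` there is a unique point of `l` collinear with `p`. -/
structure GenQuadrangle (Pt Ln : Type*) where
  incident : Pt → Ln → Prop
  line_nontrivial : ∀ l : Ln, ∃ p q : Pt, p ≠ q ∧ incident p l ∧ incident q l
  unique_line : ∀ p q : Pt, p ≠ q → ∀ l m : Ln,
    incident p l → incident q l → incident p m → incident q m → l = m
  proj : ∀ (p : Pt) (l : Ln), ¬ incident p l →
    ∃! q : Pt, incident q l ∧ ∃ m : Ln, incident p m ∧ incident q m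

namespace GenQuadrangle

variable {Pt Ln : Type*} (Q : GenQuadrangle Pt Ln)

/-- Two points are collinear if they lie on a common line. -/
def Collinear (p q : Pt) : Prop := ∃ l : Ln, Q.incident p l ∧ Q.incident q l

/-- A line `m` meets a line `l` if they have a common point. -/
def Meets (m l : Ln) : Prop := ∃ p : Pt, Q.incident p m ∧ Q.incident p l

/-- Two lines are opposite if they share no point and no point of either is collinear
with all points of the other. -/
def OppLines (l l' : Ln) : Prop :=
  (∀ p, Q.incident p l → ¬ Q.incident p l') ∧
  (∀ p, Q.incident p l → ¬ ∀ q, Q.incident q l' → Q.Collinear p q) ∧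
  (∀ p, Q.incident p l' → ¬ ∀ q, Q.incident q l → Q.Collinear p q)

/-- The regulus condition for a triple of lines: every line meeting two of them meets
the third. -/
def Regulus3 (l₁ l₂ l₃ : Ln) : Prop :=
  ∀ m : Ln, ((Q.Meets m l₁ ∧ Q.Meets m l₂) → Q.Meets m l₃) ∧
    ((Q.Meets m l₁ ∧ Q.Meets m l₃) → Q.Meets m l₂) ∧
    ((Q.Meets m l₂ ∧ Q.Meets m l₃) → Q.Meets m l₁)

end GenQuadrangle

/-- In a generalized quadrangle, let `L₁, L₂` be two opposite lines and let `L, L'` be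
two further lines, each opposite `L₁` and `L₂`, such that each of the triples
`{L₁, L₂, L}` and `{L₁, L₂, L'}` satisfies the regulus condition (every line meeting two
of the triple meets the third). Then `L` and `L'` are disjoint, and every line meeting
both `L` and `L'` also meets `L₁` and `L₂`. -/
theorem regulus_lines_disjoint_and_transversal {Pt Ln : Type*} (Q : GenQuadrangle Pt Ln)
    (L₁ L₂ L L' : Ln)
    (h12 : Q.OppLines L₁ L₂)
    (h1L : Q.OppLines L₁ L) (h2L : Q.OppLines L₂ L)
    (h1L' : Q.OppLines L₁ L') (h2L' : Q.OppLines L₂ L')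
    (hLL' : L ≠ L')
    (hreg : Q.Regulus3 L₁ L₂ L) (hreg' : Q.Regulus3 L₁ L₂ L') :
    (∀ p : Pt, Q.incident p L → ¬ Q.incident p L') ∧
    (∀ m : Ln, Q.Meets m L → Q.Meets m L' → Q.Meets m L₁ ∧ Q.Meets m L₂) := by
  have disj : ∀ p : Pt, Q.incident p L → ¬ Q.incident p L' := by
    intro p hpL hpL'
    apply h1L.2.2 p hpL
    intro u hu
    have huL : ¬ Q.incident u L := h1L.1 u hu
    obtain ⟨v, ⟨hvL, m, hum, hvm⟩, -⟩ := Q.proj u L huL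
    have hm2 : Q.Meets m L₂ := (hreg m).2.1 ⟨⟨u, hum, hu⟩, ⟨v, hvm, hvL⟩⟩
    have hmL' : Q.Meets m L' := (hreg' m).1 ⟨⟨u, hum, hu⟩, hm2⟩
    obtain ⟨w, hwm, hwL'⟩ := hmL'
    by_cases hpm : Q.incident p m
    · exact ⟨m, hpm, hum⟩
    · exfalso
      have hpv : p ≠ v := by rintro rfl; exact hpm hvm
      have hvw : v ≠ w := by
        rintro rfl
        exact hLL' (Q.unique_line p v hpv L L' hpL hvL hpL' hwL')
      obtain ⟨z, hz, huniq⟩ := Q.proj p m hpm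
      have h1 := huniq v ⟨hvm, L, hpL, hvL⟩
      have h2 := huniq w ⟨hwm, L', hpL', hwL'⟩
      exact hvw (h1.trans h2.symm)
  refine ⟨disj, ?_⟩
  intro m hmL hmL'
  obtain ⟨a, ham, haL⟩ := hmL
  obtain ⟨b, hbm, hbL'⟩ := hmL'
  have haL' : ¬ Q.incident a L' := disj a haL
  have hab : a ≠ b := by rintro rfl; exact haL' hbL'
  have haL1 : ¬ Q.incident a L₁ := fun h => h1L.1 a h haL
  obtain ⟨q, ⟨hq1, n, han, hqn⟩, -⟩ := Q.proj a L₁ haL1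
  have hn2 : Q.Meets n L₂ := (hreg n).2.1 ⟨⟨q, hqn, hq1⟩, ⟨a, han, haL⟩⟩
  have hnL' : Q.Meets n L' := (hreg' n).1 ⟨⟨q, hqn, hq1⟩, hn2⟩
  obtain ⟨c, hcn, hcL'⟩ := hnL'
  obtain ⟨z, hz, huniq⟩ := Q.proj a L' haL'
  have hbc : b = c := by
    have h1 := huniq b ⟨hbL', m, ham, hbm⟩
    have h2 := huniq c ⟨hcL', n, han, hcn⟩
    exact h1.trans h2.symm
  have hmn : n = m := Q.unique_line a b hab n m han (hbc ▸ hcn) ham hbm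
  obtain ⟨p2, hp2n, hp2L2⟩ := hn2
  exact ⟨⟨q, hmn ▸ hqn, hq1⟩, ⟨p2, hmn ▸ hp2n, hp2L2⟩⟩
end
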